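/- With the Haar basis (e_ν)_{ν∈ℕ₀} on [0,1] and the midpoint interpolation operator T_n on 2^n dyadic intervals, the following identities hold: T_n(e_ν) = e_ν if ν ≤ 2^n − 1; for ℓ ≥ n and m ∈ {0,…,2^n − 1}, T_n(e_{k(ℓ,m)}) = c(ℓ)·1_{I_m} where k(n,m) = 2^n + m, c(n) = −2^{n/2}, and for ℓ > n, k(ℓ,m) = 2^ℓ + m·2^{ℓ−n} + 2^{ℓ−n−1}, c(ℓ) = 2^{ℓ/2}; and T_n(e_ν) = 0 for all other ν ≥ 2^n. -/

import Mathlib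

open scoped Classical

/-- The `L₂`-normalized Haar functions on `[0,1]` (half-open interval convention). -/
noncomputable def haarFn (ν : ℕ) (x : ℝ) : ℝ :=
  if ν = 0 then 1
  else
    if ((ν - 2 ^ Nat.log 2 ν : ℕ) : ℝ) / 2 ^ Nat.log 2 ν ≤ x ∧
        x < (((ν - 2 ^ Nat.log 2 ν : ℕ) : ℝ) + 1 / 2) / 2 ^ Nat.log 2 ν then
      (2 : ℝ) ^ ((Nat.log 2 ν : ℝ) / 2)
    else if (((ν - 2 ^ Nat.log 2 ν : ℕ) : ℝ) + 1 / 2) / 2 ^ Nat.log 2 ν ≤ x ∧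
        x < (((ν - 2 ^ Nat.log 2 ν : ℕ) : ℝ) + 1) / 2 ^ Nat.log 2 ν then
      -((2 : ℝ) ^ ((Nat.log 2 ν : ℝ) / 2))
    else 0

/-- Midpoint interpolation on the `2^n` dyadic subintervals of `[0,1]`. -/
noncomputable def midInterp {α : Type*} (n : ℕ) (f : ℝ → α) (x : ℝ) : α :=
  f ((↑(min (⌊x * 2 ^ n⌋₊) (2 ^ n - 1)) + (1 / 2 : ℝ)) / 2 ^ n)

/-- The index `k(ℓ,m)`: `k(n,m) = 2^n + m` and, for `ℓ > n`,
`k(ℓ,m) = 2^ℓ + m 2^{ℓ-n} + 2^{ℓ-n-1}`. -/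
def kIdx (n ℓ m : ℕ) : ℕ :=
  if ℓ = n then 2 ^ n + m else 2 ^ ℓ + m * 2 ^ (ℓ - n) + 2 ^ (ℓ - n - 1)

/-- The coefficient `c(ℓ)`: `c(n) = -2^{n/2}` and `c(ℓ) = 2^{ℓ/2}` for `ℓ > n`. -/
noncomputable def cCoef (n ℓ : ℕ) : ℝ :=
  if ℓ = n then -((2 : ℝ) ^ ((n : ℝ) / 2)) else (2 : ℝ) ^ ((ℓ : ℝ) / 2)

lemma two_pow_pos' (k : ℕ) : (0:ℝ) < 2 ^ k := by positivity

lemma haar_eval (L M : ℕ) (hM : M < 2 ^ L) (y : ℝ) :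
    haarFn (2 ^ L + M) y =
      if (M:ℝ) / 2 ^ L ≤ y ∧ y < ((M:ℝ) + 1 / 2) / 2 ^ L then (2:ℝ) ^ ((L:ℝ)/2)
      else if ((M:ℝ) + 1 / 2) / 2 ^ L ≤ y ∧ y < ((M:ℝ) + 1) / 2 ^ L then
        -((2:ℝ) ^ ((L:ℝ)/2))
      else 0 := by
  have h1 : 2 ^ L + M ≠ 0 := by positivity
  have hlog : Nat.log 2 (2 ^ L + M) = L := by
    apply Nat.log_eq_of_pow_le_of_lt_pow (by omega)
    have : 2 ^ (L+1) = 2 * 2 ^ L := by ring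
    omega
  simp only [haarFn, if_neg h1, hlog, Nat.add_sub_cancel_left]

lemma floor_lt_pow (n : ℕ) {x : ℝ} (hx0 : 0 ≤ x) (hx1 : x < 1) :
    ⌊x * 2 ^ n⌋₊ < 2 ^ n := by
  rw [Nat.floor_lt (by positivity)]
  push_cast
  nlinarith [two_pow_pos' n]

lemma midInterp_eq {α : Type*} (n : ℕ) (f : ℝ → α) {x : ℝ} (hx0 : 0 ≤ x) (hx1 : x < 1) :
    midInterp n f x = f (((⌊x * 2 ^ n⌋₊ : ℝ) + 1 / 2) / 2 ^ n) := by
  have h := floor_lt_pow n hx0 hx1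
  rw [midInterp, min_eq_left (by omega)]

lemma le_div_iff_x (n A : ℕ) {x : ℝ} (hx0 : 0 ≤ x) :
    (A:ℝ) / 2 ^ n ≤ x ↔ A ≤ ⌊x * 2 ^ n⌋₊ := by
  rw [div_le_iff₀ (two_pow_pos' n)]
  exact (Nat.le_floor_iff (by positivity)).symm

lemma lt_div_iff_x (n A : ℕ) {x : ℝ} (hx0 : 0 ≤ x) :
    x < (A:ℝ) / 2 ^ n ↔ ⌊x * 2 ^ n⌋₊ < A := by
  rw [lt_div_iff₀ (two_pow_pos' n), ← Nat.floor_lt (by positivity)]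

lemma rescale (L n M : ℕ) (h : L ≤ n) :
    (M:ℝ) / 2 ^ L = ((M * 2 ^ (n - L) : ℕ) : ℝ) / 2 ^ n := by
  have h2 : (2:ℝ) ^ n = 2 ^ L * 2 ^ (n - L) := by
    rw [← pow_add]; congr 1; omega
  push_cast
  rw [h2]
  field_simp

lemma midRescale (L n M : ℕ) (h : L < n) :
    ((M:ℝ) + 1 / 2) / 2 ^ L = ((M * 2 ^ (n - L) + 2 ^ (n - L - 1) : ℕ) : ℝ) / 2 ^ n := by
  have h2 : (2:ℝ) ^ n = 2 ^ L * 2 ^ (n - L) := by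
    rw [← pow_add]; congr 1; omega
  have h3 : (2:ℝ) ^ (n - L) = 2 * 2 ^ (n - L - 1) := by
    rw [← pow_succ']; congr 1; omega
  push_cast
  rw [h2, h3]
  field_simp

lemma rescale' (L n M : ℕ) (h : L ≤ n) :
    ((M:ℝ) + 1) / 2 ^ L = (((M + 1) * 2 ^ (n - L) : ℕ) : ℝ) / 2 ^ n := by
  rw [show ((M:ℝ) + 1) = (((M + 1 : ℕ)) : ℝ) by push_cast; ring, rescale L n (M+1) h]

lemma dyadic_le (k : ℕ) {a b : ℝ} : a / 2 ^ k ≤ b / 2 ^ k ↔ a ≤ b := by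
  rw [div_le_div_iff₀ (two_pow_pos' k) (two_pow_pos' k)]
  exact mul_le_mul_iff_of_pos_right (two_pow_pos' k)

lemma dyadic_lt (k : ℕ) {a b : ℝ} : a / 2 ^ k < b / 2 ^ k ↔ a < b := by
  rw [div_lt_div_iff₀ (two_pow_pos' k) (two_pow_pos' k)]
  exact mul_lt_mul_iff_of_pos_right (two_pow_pos' k)

lemma cast_le_half {A j : ℕ} : (A:ℝ) ≤ (j:ℝ) + 1/2 ↔ A ≤ j := by
  constructor
  · intro h
    have h2 : (A:ℝ) < (j:ℝ) + 1 := by linarith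
    exact Nat.lt_add_one_iff.mp (by exact_mod_cast h2)
  · intro h
    have : (A:ℝ) ≤ (j:ℝ) := by exact_mod_cast h
    linarith

lemma half_lt_cast {A j : ℕ} : (j:ℝ) + 1/2 < (A:ℝ) ↔ j < A := by
  constructor
  · intro h
    have h2 : (j:ℝ) < (A:ℝ) := by linarith
    exact_mod_cast h2
  · intro h
    have : (j:ℝ) + 1 ≤ (A:ℝ) := by exact_mod_cast h
    linarith

lemma cast_lt_half {A j : ℕ} : (j:ℝ) < (A:ℝ) + 1/2 ↔ j ≤ A := by
  constructor
  · intro h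
    have h2 : (j:ℝ) < (A:ℝ) + 1 := by linarith
    exact Nat.lt_add_one_iff.mp (by exact_mod_cast h2)
  · intro h
    have : (j:ℝ) ≤ (A:ℝ) := by exact_mod_cast h
    linarith

lemma half_le_cast {A j : ℕ} : (A:ℝ) + 1/2 ≤ (j:ℝ) ↔ A < j := by
  constructor
  · intro h
    have h2 : (A:ℝ) < (j:ℝ) := by linarith
    exact_mod_cast h2
  · intro h
    have : (A:ℝ) + 1 ≤ (j:ℝ) := by exact_mod_cast h
    linarith

lemma cast_lt_add_one {A j : ℕ} : (j:ℝ) < (A:ℝ) + 1 ↔ j ≤ A := by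
  constructor
  · intro h
    exact Nat.lt_add_one_iff.mp (by exact_mod_cast h)
  · intro h
    have : (j:ℝ) ≤ (A:ℝ) := by exact_mod_cast h
    linarith

-- comparison lemmas at pt
lemma le_div_iff_pt (n A j : ℕ) :
    (A:ℝ) / 2 ^ n ≤ ((j:ℝ) + 1 / 2) / 2 ^ n ↔ A ≤ j := by
  rw [dyadic_le]; exact cast_le_half

lemma lt_div_iff_pt (n A j : ℕ) :
    ((j:ℝ) + 1 / 2) / 2 ^ n < (A:ℝ) / 2 ^ n ↔ j < A := by
  rw [dyadic_lt]; exact half_lt_cast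

lemma half_le_half_pt (n A j : ℕ) :
    ((A:ℝ) + 1 / 2) / 2 ^ n ≤ ((j:ℝ) + 1 / 2) / 2 ^ n ↔ A ≤ j := by
  rw [dyadic_le]
  constructor
  · intro h; exact_mod_cast (by linarith : (A:ℝ) ≤ j)
  · intro h
    have : (A:ℝ) ≤ j := by exact_mod_cast h
    linarith

lemma half_lt_half_pt (n A j : ℕ) :
    ((j:ℝ) + 1 / 2) / 2 ^ n < ((A:ℝ) + 1 / 2) / 2 ^ n ↔ j < A := by
  rw [dyadic_lt]
  constructor
  · intro h; exact_mod_cast (by linarith : (j:ℝ) < A)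
  · intro h
    have : (j:ℝ) < A := by exact_mod_cast h
    linarith

/-- Action of the midpoint interpolation `T_n` on the Haar basis:
`T_n e_ν = e_ν` for `ν < 2^n`; `T_n e_{k(ℓ,m)} = c(ℓ) · 1_{I_m}` for `ℓ ≥ n`,
`m < 2^n`; and `T_n e_ν = 0` for all other `ν ≥ 2^n`. -/
theorem stmt19 (n : ℕ) :
    (∀ ν < 2 ^ n, ∀ x : ℝ, 0 ≤ x → x < 1 →
      midInterp n (haarFn ν) x = haarFn ν x) ∧
    (∀ ℓ m : ℕ, n ≤ ℓ → m < 2 ^ n → ∀ x : ℝ, 0 ≤ x → x < 1 →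
      midInterp n (haarFn (kIdx n ℓ m)) x =
        cCoef n ℓ *
          (if (m : ℝ) / 2 ^ n ≤ x ∧ x < ((m : ℝ) + 1) / 2 ^ n then (1 : ℝ) else 0)) ∧
    (∀ ν : ℕ, 2 ^ n ≤ ν → (∀ ℓ m : ℕ, n ≤ ℓ → m < 2 ^ n → ν ≠ kIdx n ℓ m) →
      ∀ x : ℝ, 0 ≤ x → x < 1 → midInterp n (haarFn ν) x = 0) := by
  refine ⟨?_, ?_, ?_⟩
  · -- Part 1
    intro ν hν x hx0 hx1
    rw [midInterp_eq n _ hx0 hx1]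
    rcases Nat.eq_zero_or_pos ν with h0 | hpos
    · subst h0; simp [haarFn]
    · set L := Nat.log 2 ν with hL
      have hpowle : 2 ^ L ≤ ν := Nat.pow_log_le_self 2 (by omega)
      have hlt2 : ν < 2 ^ (L + 1) := Nat.lt_pow_succ_log_self (by norm_num) ν
      set M := ν - 2 ^ L with hMdef
      have hνeq : ν = 2 ^ L + M := by omega
      have hMlt : M < 2 ^ L := by
        have h21 : 2 ^ (L + 1) = 2 * 2 ^ L := by ring
        omega
      have hLn : L + 1 ≤ n := by
        by_contra hc
        have hnL : n ≤ L := by omega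
        have : 2 ^ n ≤ 2 ^ L := Nat.pow_le_pow_right (by norm_num) hnL
        omega
      rw [hνeq, haar_eval L M hMlt, haar_eval L M hMlt,
        rescale L n M (by omega), midRescale L n M (by omega), rescale' L n M (by omega)]
      simp only [le_div_iff_pt, lt_div_iff_pt, le_div_iff_x n _ hx0, lt_div_iff_x n _ hx0]
  · -- Part 2
    intro ℓ m hℓ hm x hx0 hx1
    have hjlt : ⌊x * 2 ^ n⌋₊ < 2 ^ n := floor_lt_pow n hx0 hx1
    rw [midInterp_eq n _ hx0 hx1]
    have hcast : ((m:ℝ) + 1) = (((m + 1 : ℕ)) : ℝ) := by push_cast; ring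
    rcases eq_or_lt_of_le hℓ with heq | hlt
    · subst heq
      rw [kIdx, if_pos rfl, cCoef, if_pos rfl, haar_eval n m hm, hcast]
      simp only [le_div_iff_pt, lt_div_iff_pt, half_le_half_pt, half_lt_half_pt,
        le_div_iff_x n _ hx0, lt_div_iff_x n _ hx0]
      split_ifs <;> first | ring1 | (exfalso; omega)
    · rw [kIdx, if_neg (by omega), cCoef, if_neg (by omega)]
      have hcpos : 0 < 2 ^ (ℓ - n) := Nat.pow_pos (by norm_num)
      have hdpos : 0 < 2 ^ (ℓ - n - 1) := Nat.pow_pos (by norm_num)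
      have hA : m * 2 ^ (ℓ - n) + 2 ^ (ℓ - n - 1) < 2 ^ ℓ := by
        have e1 : 2 ^ ℓ = 2 ^ n * 2 ^ (ℓ - n) := by
          rw [← pow_add]; congr 1; omega
        have e2 : 2 ^ (ℓ - n) = 2 * 2 ^ (ℓ - n - 1) := by
          rw [← pow_succ']; congr 1; omega
        have hm1 : m + 1 ≤ 2 ^ n := hm
        calc m * 2 ^ (ℓ - n) + 2 ^ (ℓ - n - 1)
            < (m + 1) * 2 ^ (ℓ - n) := by rw [add_one_mul]; omega
          _ ≤ 2 ^ n * 2 ^ (ℓ - n) := Nat.mul_le_mul_right _ hm1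
          _ = 2 ^ ℓ := e1.symm
      rw [show 2 ^ ℓ + m * 2 ^ (ℓ - n) + 2 ^ (ℓ - n - 1)
            = 2 ^ ℓ + (m * 2 ^ (ℓ - n) + 2 ^ (ℓ - n - 1)) by omega,
        haar_eval ℓ _ hA, midRescale n ℓ _ hlt, hcast]
      have key : ∀ j : ℕ, (j * 2 ^ (ℓ - n) + 2 ^ (ℓ - n - 1)
          = m * 2 ^ (ℓ - n) + 2 ^ (ℓ - n - 1)) ↔ j = m := by
        intro j
        constructor
        · intro h
          exact Nat.eq_of_mul_eq_mul_right hcpos (by omega)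
        · intro h; rw [h]
      simp only [Nat.cast_le, Nat.cast_lt, cast_le_half, half_lt_cast, cast_lt_half,
        half_le_cast, cast_lt_add_one, le_div_iff_x n _ hx0, lt_div_iff_x n _ hx0,
        dyadic_le, dyadic_lt]
      by_cases hjm : ⌊x * 2 ^ n⌋₊ = m
      · have he := (key _).mpr hjm
        rw [if_pos ⟨le_of_eq he.symm, le_of_eq he⟩, if_pos ⟨by omega, by omega⟩]
        ring
      · have hne : ¬ (⌊x * 2 ^ n⌋₊ * 2 ^ (ℓ - n) + 2 ^ (ℓ - n - 1)
            = m * 2 ^ (ℓ - n) + 2 ^ (ℓ - n - 1)) := fun h => hjm ((key _).mp h)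
        rw [if_neg (fun h => hne (le_antisymm h.2 h.1)),
          if_neg (fun h => absurd (lt_of_lt_of_le h.1 h.2) (lt_irrefl _)),
          if_neg (fun h => hjm (by omega))]
        ring
  · -- Part 3
    intro ν hν hk x hx0 hx1
    have hjlt : ⌊x * 2 ^ n⌋₊ < 2 ^ n := floor_lt_pow n hx0 hx1
    rw [midInterp_eq n _ hx0 hx1]
    have hpos : 0 < ν := by
      have : 0 < 2 ^ n := Nat.pow_pos (by norm_num)
      omega
    set L := Nat.log 2 ν with hL
    have hpowle : 2 ^ L ≤ ν := Nat.pow_log_le_self 2 (by omega)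
    have hlt2 : ν < 2 ^ (L + 1) := Nat.lt_pow_succ_log_self (by norm_num) ν
    set M := ν - 2 ^ L with hMdef
    have hνeq : ν = 2 ^ L + M := by omega
    have hMlt : M < 2 ^ L := by
      have h21 : 2 ^ (L + 1) = 2 * 2 ^ L := by ring
      omega
    have hnL : n ≤ L := by
      by_contra hc
      have : 2 ^ (L + 1) ≤ 2 ^ n := Nat.pow_le_pow_right (by norm_num) (by omega)
      omega
    rcases eq_or_lt_of_le hnL with heq | hlt
    · exfalso
      have h2 : (2:ℕ) ^ n = 2 ^ L := by rw [heq]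
      exact hk n M le_rfl (by omega) (by rw [kIdx, if_pos rfl]; omega)
    · rw [hνeq, haar_eval L M hMlt, midRescale n L _ hlt]
      have hcontra : ¬ (⌊x * 2 ^ n⌋₊ * 2 ^ (L - n) + 2 ^ (L - n - 1) = M) := by
        intro h
        apply hk L ⌊x * 2 ^ n⌋₊ (le_of_lt hlt) hjlt
        rw [kIdx, if_neg (by omega), hνeq, ← h]
        ring
      simp only [Nat.cast_le, Nat.cast_lt, cast_le_half, half_lt_cast, cast_lt_half,
        half_le_cast, cast_lt_add_one, dyadic_le, dyadic_lt]
      rw [if_neg (fun h => hcontra (le_antisymm h.2 h.1)),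
        if_neg (fun h => absurd (lt_of_lt_of_le h.1 h.2) (lt_irrefl _))]
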